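/- Let G be the 'extended star' graph on vertices {1, …, 12} with edge set {{1,2},{2,3},{1,4},{4,5},{5,6},{1,7},{7,8},{8,9},{1,10},{10,11},{11,12}}, and consider the data arrangement problem with d = 4, so h = ⌈log_4 12⌉ = 2 and the host tree has 16 leaves. Then: (i) there exists an injective arrangement φ: {1,…,12} → {1,…,16} with OV(G, 4, φ) = 28; and (ii) every contiguous arrangement ψ (an injective arrangement whose image is a set of 12 consecutive indices {i, i+1, …, i+11} for some 1 ≤ i ≤ 5) satisfies OV(G, 4, ψ) > 28. -/

import Mathlib

/-- The canonical leaf distance on the complete `d`-regular tree of height `h`: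
`δ_{d,h}(t,j) = 2·min{k ∈ {1,…,h} : ⌊(t−1)/d^k⌋ = ⌊(j−1)/d^k⌋}` for `t ≠ j`,
and `δ_{d,h}(t,t) = 0`. -/
noncomputable def leafDist (d h t j : ℕ) : ℕ :=
  if t = j then 0
  else 2 * sInf {k : ℕ | 1 ≤ k ∧ k ≤ h ∧ (t - 1) / d ^ k = (j - 1) / d ^ k}

lemma leafDist_comm (d h t j : ℕ) : leafDist d h t j = leafDist d h j t := by
  unfold leafDist
  rcases eq_or_ne t j with h' | h'
  · simp [h']
  · rw [if_neg h', if_neg (Ne.symm h')]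
    have hset : {k : ℕ | 1 ≤ k ∧ k ≤ h ∧ (t - 1) / d ^ k = (j - 1) / d ^ k}
        = {k : ℕ | 1 ≤ k ∧ k ≤ h ∧ (j - 1) / d ^ k = (t - 1) / d ^ k} := by
      ext k
      exact and_congr_right fun _ => and_congr_right fun _ => eq_comm
    rw [hset]

/-- The objective value of an arrangement `φ` of the guest graph `G` on the leaves
of the complete `d`-regular tree of height `h`:
`OV(G,d,φ) = Σ_{{u,v} ∈ E(G)} δ_{d,h}(φ(u), φ(v))`. -/
noncomputable def OV {V : Type*} [Fintype V] [DecidableEq V] (G : SimpleGraph V)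
    [DecidableRel G.Adj] (d h : ℕ) (φ : V → ℕ) : ℕ :=
  ∑ e ∈ G.edgeFinset,
    Sym2.lift ⟨fun u v => leafDist d h (φ u) (φ v),
      fun u v => leafDist_comm d h (φ u) (φ v)⟩ e

/-- The edges of the "extended star" graph of Example 3 of the paper; the paper's
vertex `k ∈ {1,…,12}` corresponds to `(k−1 : Fin 12)`, so the paper's edge set
`{1,2},{2,3},{1,4},{4,5},{5,6},{1,7},{7,8},{8,9},{1,10},{10,11},{11,12}` becomes
the following set of unordered pairs on `Fin 12`. -/
def extStarEdges : Finset (Sym2 (Fin 12)) :=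
  {s(0, 1), s(1, 2), s(0, 3), s(3, 4), s(4, 5), s(0, 6), s(6, 7), s(7, 8),
   s(0, 9), s(9, 10), s(10, 11)}

/-- The "extended star" guest graph of Example 3 of the paper, on 12 vertices. -/
def extStar : SimpleGraph (Fin 12) where
  Adj u v := s(u, v) ∈ extStarEdges
  symm := ⟨fun u v h => by
    show s(v, u) ∈ extStarEdges
    rwa [Sym2.eq_swap]⟩
  loopless := ⟨fun u => by
    show s(u, u) ∉ extStarEdges
    revert u
    decide⟩

instance : DecidableRel extStar.Adj :=
  fun u v => decidable_of_iff (s(u, v) ∈ extStarEdges) Iff.rfl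

/- ===== auxiliary lemmas ===== -/

lemma leafDist_eval {t j : ℕ} (ht1 : 1 ≤ t) (ht : t ≤ 16) (hj1 : 1 ≤ j) (hj : j ≤ 16)
    (hne : t ≠ j) :
    leafDist 4 2 t j = if (t-1)/4 = (j-1)/4 then 2 else 4 := by
  unfold leafDist
  rw [if_neg hne]
  set S : Set ℕ := {k : ℕ | 1 ≤ k ∧ k ≤ 2 ∧ (t - 1) / 4 ^ k = (j - 1) / 4 ^ k} with hS
  have h2 : 2 ∈ S := by
    refine ⟨by omega, by omega, ?_⟩
    show (t-1)/4^2 = (j-1)/4^2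
    norm_num
    omega
  have h0 : 0 ∉ S := by intro h; exact absurd h.1 (by omega)
  split_ifs with h
  · have h1 : 1 ∈ S := ⟨le_refl 1, by omega, by simpa using h⟩
    have hinf : sInf S = 1 := by
      refine le_antisymm (Nat.sInf_le h1) ?_
      rcases Nat.eq_zero_or_pos (sInf S) with h' | h'
      · exact absurd (h' ▸ Nat.sInf_mem ⟨1, h1⟩) h0
      · exact h'
    rw [hinf]
  · have h1 : 1 ∉ S := by
      intro hmem
      exact h (by simpa using hmem.2.2)
    have hmem := Nat.sInf_mem (⟨2, h2⟩ : S.Nonempty)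
    have hle := Nat.sInf_le h2
    have hne0 : sInf S ≠ 0 := fun e => h0 (e ▸ hmem)
    have hne1 : sInf S ≠ 1 := fun e => h1 (e ▸ hmem)
    have heq : sInf S = 2 := by omega
    rw [heq]

lemma OV_exp (φ : Fin 12 → ℕ) : OV extStar 4 2 φ =
    leafDist 4 2 (φ 0) (φ 1) + (leafDist 4 2 (φ 1) (φ 2) + (leafDist 4 2 (φ 0) (φ 3) +
    (leafDist 4 2 (φ 3) (φ 4) + (leafDist 4 2 (φ 4) (φ 5) + (leafDist 4 2 (φ 0) (φ 6) +
    (leafDist 4 2 (φ 6) (φ 7) + (leafDist 4 2 (φ 7) (φ 8) + (leafDist 4 2 (φ 0) (φ 9) +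
    (leafDist 4 2 (φ 9) (φ 10) + leafDist 4 2 (φ 10) (φ 11)))))))))) := by
  unfold OV
  rw [show extStar.edgeFinset = extStarEdges by decide]
  rw [extStarEdges]
  rw [Finset.sum_insert (by decide), Finset.sum_insert (by decide), Finset.sum_insert (by decide),
    Finset.sum_insert (by decide), Finset.sum_insert (by decide), Finset.sum_insert (by decide),
    Finset.sum_insert (by decide), Finset.sum_insert (by decide), Finset.sum_insert (by decide),
    Finset.sum_insert (by decide), Finset.sum_singleton]
  rfl

/- ===== small decidable helpers over Fin 4 ===== -/

lemma helperA : ∀ m a b x y z : Fin 4, x ≠ m → y ≠ m → z ≠ m → x ≠ y → x ≠ z → y ≠ z →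
    (if a = x ∨ b = x then (1:ℕ) else 0) + (if a = y ∨ b = y then 1 else 0) +
      (if a = z ∨ b = z then 1 else 0)
    ≤ (if m = a then 0 else 1) + (if a = b then 0 else 1) := by decide

lemma helperB : ∀ m a b c x y z : Fin 4, x ≠ m → y ≠ m → z ≠ m → x ≠ y → x ≠ z → y ≠ z →
    (if a = x ∨ b = x ∨ c = x then (1:ℕ) else 0) + (if a = y ∨ b = y ∨ c = y then 1 else 0) +
      (if a = z ∨ b = z ∨ c = z then 1 else 0)
    ≤ (if m = a then 0 else 1) + (if a = b then 0 else 1) + (if b = c then 0 else 1) := by decide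

lemma helperA2 : ∀ m a b x : Fin 4, (x = 1 ∨ x = 2) → (m = 1 ∨ m = 2) → x ≠ m →
    (if a = x ∨ b = x then (1:ℕ) else 0) +
      (if (a = 0 ∨ a = 3) ∨ (b = 0 ∨ b = 3) then 1 else 0)
    ≤ (if m = a then 0 else 1) + (if a = b then 0 else 1) := by decide

lemma helperB2 : ∀ m a b c x : Fin 4, (x = 1 ∨ x = 2) → (m = 1 ∨ m = 2) → x ≠ m →
    (if a = x ∨ b = x ∨ c = x then (1:ℕ) else 0) +
      (if (a = 0 ∨ a = 3) ∨ (b = 0 ∨ b = 3) ∨ (c = 0 ∨ c = 3) then 1 else 0)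
    ≤ (if m = a then 0 else 1) + (if a = b then 0 else 1) + (if b = c then 0 else 1) := by decide

lemma countA : ∀ a b x : Fin 4, (if a = x then (1:ℕ) else 0) + (if b = x then 1 else 0)
    ≤ 3 * (if a = x ∨ b = x then 1 else 0) := by decide

lemma countB : ∀ a b c x : Fin 4,
    (if a = x then (1:ℕ) else 0) + (if b = x then 1 else 0) + (if c = x then 1 else 0)
    ≤ 3 * (if a = x ∨ b = x ∨ c = x then 1 else 0) := by decide

lemma countA03 : ∀ a b : Fin 4,
    (if a = 0 ∨ a = 3 then (1:ℕ) else 0) + (if b = 0 ∨ b = 3 then 1 else 0)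
    ≤ 3 * (if (a = 0 ∨ a = 3) ∨ (b = 0 ∨ b = 3) then 1 else 0) := by decide

lemma countB03 : ∀ a b c : Fin 4,
    (if a = 0 ∨ a = 3 then (1:ℕ) else 0) + (if b = 0 ∨ b = 3 then 1 else 0) +
      (if c = 0 ∨ c = 3 then 1 else 0)
    ≤ 3 * (if (a = 0 ∨ a = 3) ∨ (b = 0 ∨ b = 3) ∨ (c = 0 ∨ c = 3) then 1 else 0) := by decide

lemma vertex_one03 : ∀ y : Fin 4, (if y = 1 then (1:ℕ) else 0) + (if y = 2 then 1 else 0) +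
    (if y = 0 ∨ y = 3 then 1 else 0) = 1 := by decide

lemma sum12 (f : Fin 12 → ℕ) : (∑ v : Fin 12, f v) =
    f 0 + (f 1 + (f 2 + (f 3 + (f 4 + (f 5 + (f 6 + (f 7 + (f 8 + (f 9 + (f 10 + f 11)))))))))) := by
  simp only [Fin.sum_univ_succ, Fin.sum_univ_zero, add_zero]
  rfl

/- ===== small arithmetic lemmas (kept standalone so `omega` works in a tiny context) ===== -/

lemma fiber_legs {j0 j1 j2 j3 j4 j5 j6 j7 j8 j9 j10 j11 m1 m2 m3 m4 : ℕ}
    (h : j0 + (j1 + (j2 + (j3 + (j4 + (j5 + (j6 + (j7 + (j8 + (j9 + (j10 + j11)))))))))) = 4)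
    (h0 : j0 = 0)
    (c1 : j1 + j2 ≤ 3 * m1) (c2 : j3 + j4 + j5 ≤ 3 * m2)
    (c3 : j6 + j7 + j8 ≤ 3 * m3) (c4 : j9 + j10 + j11 ≤ 3 * m4) :
    2 ≤ m1 + m2 + m3 + m4 := by omega

lemma class_total {a0 a1 a2 a3 a4 a5 a6 a7 a8 a9 a10 a11
    b0 b1 b2 b3 b4 b5 b6 b7 b8 b9 b10 b11
    k0 k1 k2 k3 k4 k5 k6 k7 k8 k9 k10 k11 : ℕ}
    (hA : a0 + (a1 + (a2 + (a3 + (a4 + (a5 + (a6 + (a7 + (a8 + (a9 + (a10 + a11)))))))))) = 4)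
    (hB : b0 + (b1 + (b2 + (b3 + (b4 + (b5 + (b6 + (b7 + (b8 + (b9 + (b10 + b11)))))))))) = 4)
    (v0 : a0 + b0 + k0 = 1) (v1 : a1 + b1 + k1 = 1) (v2 : a2 + b2 + k2 = 1)
    (v3 : a3 + b3 + k3 = 1) (v4 : a4 + b4 + k4 = 1) (v5 : a5 + b5 + k5 = 1)
    (v6 : a6 + b6 + k6 = 1) (v7 : a7 + b7 + k7 = 1) (v8 : a8 + b8 + k8 = 1)
    (v9 : a9 + b9 + k9 = 1) (v10 : a10 + b10 + k10 = 1) (v11 : a11 + b11 + k11 = 1) :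
    k0 + (k1 + (k2 + (k3 + (k4 + (k5 + (k6 + (k7 + (k8 + (k9 + (k10 + k11)))))))))) = 4 := by
  omega

lemma final_bound3 {m1 k1 l1 m2 k2 l2 m3 k3 l3 m4 k4 l4
    a1 a2 b1 b2 b3 c1 c2 c3 d1 d2 d3 : ℕ}
    (LA : m1 + k1 + l1 ≤ a1 + a2) (LB : m2 + k2 + l2 ≤ b1 + b2 + b3)
    (LC : m3 + k3 + l3 ≤ c1 + c2 + c3) (LD : m4 + k4 + l4 ≤ d1 + d2 + d3)
    (h1 : 2 ≤ m1 + m2 + m3 + m4) (h2 : 2 ≤ k1 + k2 + k3 + k4) :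
    4 ≤ a1 + a2 + (b1 + b2 + b3) + (c1 + c2 + c3) + (d1 + d2 + d3) := by omega

lemma final_bound2 {m1 k1 m2 k2 m3 k3 m4 k4
    a1 a2 b1 b2 b3 c1 c2 c3 d1 d2 d3 : ℕ}
    (LA : m1 + k1 ≤ a1 + a2) (LB : m2 + k2 ≤ b1 + b2 + b3)
    (LC : m3 + k3 ≤ c1 + c2 + c3) (LD : m4 + k4 ≤ d1 + d2 + d3)
    (h1 : 2 ≤ m1 + m2 + m3 + m4) (h2 : 2 ≤ k1 + k2 + k3 + k4) :
    4 ≤ a1 + a2 + (b1 + b2 + b3) + (c1 + c2 + c3) + (d1 + d2 + d3) := by omega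

/- ===== the key combinatorial lemma ===== -/

lemma crossing_ge_four (c : Fin 12 → Fin 4)
    (h1 : (∑ v : Fin 12, if c v = 1 then (1:ℕ) else 0) = 4)
    (h2 : (∑ v : Fin 12, if c v = 2 then (1:ℕ) else 0) = 4) :
    4 ≤ (if c 0 = c 1 then 0 else 1) + (if c 1 = c 2 then 0 else 1)
      + ((if c 0 = c 3 then 0 else 1) + (if c 3 = c 4 then 0 else 1) + (if c 4 = c 5 then 0 else 1))
      + ((if c 0 = c 6 then 0 else 1) + (if c 6 = c 7 then 0 else 1) + (if c 7 = c 8 then 0 else 1))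
      + ((if c 0 = c 9 then 0 else 1) + (if c 9 = c 10 then 0 else 1) + (if c 10 = c 11 then 0 else 1)) := by
  have h1' : (if c 0 = 1 then (1:ℕ) else 0) + ((if c 1 = 1 then (1:ℕ) else 0) + ((if c 2 = 1 then (1:ℕ) else 0) + ((if c 3 = 1 then (1:ℕ) else 0) + ((if c 4 = 1 then (1:ℕ) else 0) + ((if c 5 = 1 then (1:ℕ) else 0) + ((if c 6 = 1 then (1:ℕ) else 0) + ((if c 7 = 1 then (1:ℕ) else 0) + ((if c 8 = 1 then (1:ℕ) else 0) + ((if c 9 = 1 then (1:ℕ) else 0) + ((if c 10 = 1 then (1:ℕ) else 0) + (if c 11 = 1 then (1:ℕ) else 0))))))))))) = 4 := (sum12 _).symm.trans h1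
  have h2' : (if c 0 = 2 then (1:ℕ) else 0) + ((if c 1 = 2 then (1:ℕ) else 0) + ((if c 2 = 2 then (1:ℕ) else 0) + ((if c 3 = 2 then (1:ℕ) else 0) + ((if c 4 = 2 then (1:ℕ) else 0) + ((if c 5 = 2 then (1:ℕ) else 0) + ((if c 6 = 2 then (1:ℕ) else 0) + ((if c 7 = 2 then (1:ℕ) else 0) + ((if c 8 = 2 then (1:ℕ) else 0) + ((if c 9 = 2 then (1:ℕ) else 0) + ((if c 10 = 2 then (1:ℕ) else 0) + (if c 11 = 2 then (1:ℕ) else 0))))))))))) = 4 := (sum12 _).symm.trans h2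
  clear h1 h2
  have hm : c 0 = 0 ∨ c 0 = 1 ∨ c 0 = 2 ∨ c 0 = 3 := by
    have h4 : ∀ y : Fin 4, y = 0 ∨ y = 1 ∨ y = 2 ∨ y = 3 := by decide
    exact h4 (c 0)
  rcases hm with hm | hm | hm | hm
  · -- m = 0 : colors 1, 2, 3
    have LA := helperA (c 0) (c 1) (c 2) 1 2 3
      (by rw [hm]; decide) (by rw [hm]; decide) (by rw [hm]; decide) (by decide) (by decide) (by decide)
    have LB := helperB (c 0) (c 3) (c 4) (c 5) 1 2 3
      (by rw [hm]; decide) (by rw [hm]; decide) (by rw [hm]; decide) (by decide) (by decide) (by decide)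
    have LC := helperB (c 0) (c 6) (c 7) (c 8) 1 2 3
      (by rw [hm]; decide) (by rw [hm]; decide) (by rw [hm]; decide) (by decide) (by decide) (by decide)
    have LD := helperB (c 0) (c 9) (c 10) (c 11) 1 2 3
      (by rw [hm]; decide) (by rw [hm]; decide) (by rw [hm]; decide) (by decide) (by decide) (by decide)
    have e1 : (if c 0 = 1 then (1:ℕ) else 0) = 0 := by rw [hm]; decide
    have e2 : (if c 0 = 2 then (1:ℕ) else 0) = 0 := by rw [hm]; decide
    have hT1 := fiber_legs h1' e1 (countA (c 1) (c 2) 1) (countB (c 3) (c 4) (c 5) 1)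
      (countB (c 6) (c 7) (c 8) 1) (countB (c 9) (c 10) (c 11) 1)
    have hT2 := fiber_legs h2' e2 (countA (c 1) (c 2) 2) (countB (c 3) (c 4) (c 5) 2)
      (countB (c 6) (c 7) (c 8) 2) (countB (c 9) (c 10) (c 11) 2)
    exact final_bound3 LA LB LC LD hT1 hT2
  · -- m = 1 : color 2 and class {0,3}
    have LA := helperA2 (c 0) (c 1) (c 2) 2 (Or.inr rfl) (Or.inl hm) (by rw [hm]; decide)
    have LB := helperB2 (c 0) (c 3) (c 4) (c 5) 2 (Or.inr rfl) (Or.inl hm) (by rw [hm]; decide)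
    have LC := helperB2 (c 0) (c 6) (c 7) (c 8) 2 (Or.inr rfl) (Or.inl hm) (by rw [hm]; decide)
    have LD := helperB2 (c 0) (c 9) (c 10) (c 11) 2 (Or.inr rfl) (Or.inl hm) (by rw [hm]; decide)
    have e2 : (if c 0 = 2 then (1:ℕ) else 0) = 0 := by rw [hm]; decide
    have eK : (if c 0 = 0 ∨ c 0 = 3 then (1:ℕ) else 0) = 0 := by rw [hm]; decide
    have hT2 := fiber_legs h2' e2 (countA (c 1) (c 2) 2) (countB (c 3) (c 4) (c 5) 2)
      (countB (c 6) (c 7) (c 8) 2) (countB (c 9) (c 10) (c 11) 2)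
    have hK := class_total h1' h2' (vertex_one03 (c 0)) (vertex_one03 (c 1)) (vertex_one03 (c 2))
      (vertex_one03 (c 3)) (vertex_one03 (c 4)) (vertex_one03 (c 5)) (vertex_one03 (c 6))
      (vertex_one03 (c 7)) (vertex_one03 (c 8)) (vertex_one03 (c 9)) (vertex_one03 (c 10))
      (vertex_one03 (c 11))
    have hTK := fiber_legs hK eK (countA03 (c 1) (c 2)) (countB03 (c 3) (c 4) (c 5))
      (countB03 (c 6) (c 7) (c 8)) (countB03 (c 9) (c 10) (c 11))
    exact final_bound2 LA LB LC LD hT2 hTK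
  · -- m = 2 : color 1 and class {0,3}
    have LA := helperA2 (c 0) (c 1) (c 2) 1 (Or.inl rfl) (Or.inr hm) (by rw [hm]; decide)
    have LB := helperB2 (c 0) (c 3) (c 4) (c 5) 1 (Or.inl rfl) (Or.inr hm) (by rw [hm]; decide)
    have LC := helperB2 (c 0) (c 6) (c 7) (c 8) 1 (Or.inl rfl) (Or.inr hm) (by rw [hm]; decide)
    have LD := helperB2 (c 0) (c 9) (c 10) (c 11) 1 (Or.inl rfl) (Or.inr hm) (by rw [hm]; decide)
    have e1 : (if c 0 = 1 then (1:ℕ) else 0) = 0 := by rw [hm]; decide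
    have eK : (if c 0 = 0 ∨ c 0 = 3 then (1:ℕ) else 0) = 0 := by rw [hm]; decide
    have hT1 := fiber_legs h1' e1 (countA (c 1) (c 2) 1) (countB (c 3) (c 4) (c 5) 1)
      (countB (c 6) (c 7) (c 8) 1) (countB (c 9) (c 10) (c 11) 1)
    have hK := class_total h1' h2' (vertex_one03 (c 0)) (vertex_one03 (c 1)) (vertex_one03 (c 2))
      (vertex_one03 (c 3)) (vertex_one03 (c 4)) (vertex_one03 (c 5)) (vertex_one03 (c 6))
      (vertex_one03 (c 7)) (vertex_one03 (c 8)) (vertex_one03 (c 9)) (vertex_one03 (c 10))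
      (vertex_one03 (c 11))
    have hTK := fiber_legs hK eK (countA03 (c 1) (c 2)) (countB03 (c 3) (c 4) (c 5))
      (countB03 (c 6) (c 7) (c 8)) (countB03 (c 9) (c 10) (c 11))
    exact final_bound2 LA LB LC LD hT1 hTK
  · -- m = 3 : colors 1, 2, 0
    have LA := helperA (c 0) (c 1) (c 2) 1 2 0
      (by rw [hm]; decide) (by rw [hm]; decide) (by rw [hm]; decide) (by decide) (by decide) (by decide)
    have LB := helperB (c 0) (c 3) (c 4) (c 5) 1 2 0
      (by rw [hm]; decide) (by rw [hm]; decide) (by rw [hm]; decide) (by decide) (by decide) (by decide)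
    have LC := helperB (c 0) (c 6) (c 7) (c 8) 1 2 0
      (by rw [hm]; decide) (by rw [hm]; decide) (by rw [hm]; decide) (by decide) (by decide) (by decide)
    have LD := helperB (c 0) (c 9) (c 10) (c 11) 1 2 0
      (by rw [hm]; decide) (by rw [hm]; decide) (by rw [hm]; decide) (by decide) (by decide) (by decide)
    have e1 : (if c 0 = 1 then (1:ℕ) else 0) = 0 := by rw [hm]; decide
    have e2 : (if c 0 = 2 then (1:ℕ) else 0) = 0 := by rw [hm]; decide
    have hT1 := fiber_legs h1' e1 (countA (c 1) (c 2) 1) (countB (c 3) (c 4) (c 5) 1)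
      (countB (c 6) (c 7) (c 8) 1) (countB (c 9) (c 10) (c 11) 1)
    have hT2 := fiber_legs h2' e2 (countA (c 1) (c 2) 2) (countB (c 3) (c 4) (c 5) 2)
      (countB (c 6) (c 7) (c 8) 2) (countB (c 9) (c 10) (c 11) 2)
    exact final_bound3 LA LB LC LD hT1 hT2

/- ===== casting helpers ===== -/

open Fin.NatCast

lemma cast_eq_cast_iff (a b : ℕ) (ha : a ≤ 3) (hb : b ≤ 3) :
    ((a : Fin 4) = (b : Fin 4)) ↔ a = b := by
  rw [Fin.ext_iff, Fin.val_natCast, Fin.val_natCast,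
    Nat.mod_eq_of_lt (by omega), Nat.mod_eq_of_lt (by omega)]

lemma cast_eq_one_iff (a : ℕ) (ha : a ≤ 3) : ((a : Fin 4) = (1 : Fin 4)) ↔ a = 1 := by
  rw [Fin.ext_iff, Fin.val_natCast, Nat.mod_eq_of_lt (by omega),
    show ((1 : Fin 4) : ℕ) = 1 from rfl]

lemma cast_eq_two_iff (a : ℕ) (ha : a ≤ 3) : ((a : Fin 4) = (2 : Fin 4)) ↔ a = 2 := by
  rw [Fin.ext_iff, Fin.val_natCast, Nat.mod_eq_of_lt (by omega),
    show ((2 : Fin 4) : ℕ) = 2 from rfl]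

lemma ld_cast (a b : ℕ) (ha : a ≤ 3) (hb : b ≤ 3) :
    (if a = b then (2:ℕ) else 4) = 2 + 2 * (if (a : Fin 4) = (b : Fin 4) then 0 else 1) := by
  have h := cast_eq_cast_iff a b ha hb
  by_cases hab : a = b
  · rw [if_pos hab, if_pos (h.mpr hab)]
  · rw [if_neg hab, if_neg (fun hh => hab (h.mp hh))]
/-- Example 3: for the extended star guest graph with `d = 4`,
`h = ⌈log_4 12⌉ = 2` and `4^2 = 16` leaves: (i) some injective arrangement
`φ : V → {1,…,16}` achieves objective value `28`; and (ii) every contiguous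
arrangement `ψ` (an injective arrangement whose image is a set of `12`
consecutive indices `{i,…,i+11}` with `1 ≤ i ≤ 5`) has objective value `> 28`. -/
theorem extended_star_no_contiguous_optimum :
    (∃ φ : Fin 12 → ℕ, Function.Injective φ ∧ (∀ v, 1 ≤ φ v ∧ φ v ≤ 16) ∧
      OV extStar 4 2 φ = 28) ∧
    (∀ ψ : Fin 12 → ℕ, Function.Injective ψ → (∀ v, 1 ≤ ψ v ∧ ψ v ≤ 16) →
      (∃ i, 1 ≤ i ∧ i ≤ 5 ∧ ∀ v, i ≤ ψ v ∧ ψ v ≤ i + 11) →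
      28 < OV extStar 4 2 ψ) := by
  constructor
  · refine ⟨![1,2,3,5,6,7,9,10,11,13,14,15], by decide, by decide, ?_⟩
    rw [OV_exp]
    show leafDist 4 2 1 2 + (leafDist 4 2 2 3 + (leafDist 4 2 1 5 +
      (leafDist 4 2 5 6 + (leafDist 4 2 6 7 + (leafDist 4 2 1 9 +
      (leafDist 4 2 9 10 + (leafDist 4 2 10 11 + (leafDist 4 2 1 13 +
      (leafDist 4 2 13 14 + leafDist 4 2 14 15))))))))) = 28
    rw [leafDist_eval (by norm_num) (by norm_num) (by norm_num) (by norm_num) (by norm_num),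
        leafDist_eval (by norm_num) (by norm_num) (by norm_num) (by norm_num) (by norm_num),
        leafDist_eval (by norm_num) (by norm_num) (by norm_num) (by norm_num) (by norm_num),
        leafDist_eval (by norm_num) (by norm_num) (by norm_num) (by norm_num) (by norm_num),
        leafDist_eval (by norm_num) (by norm_num) (by norm_num) (by norm_num) (by norm_num),
        leafDist_eval (by norm_num) (by norm_num) (by norm_num) (by norm_num) (by norm_num),
        leafDist_eval (by norm_num) (by norm_num) (by norm_num) (by norm_num) (by norm_num),
        leafDist_eval (by norm_num) (by norm_num) (by norm_num) (by norm_num) (by norm_num),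
        leafDist_eval (by norm_num) (by norm_num) (by norm_num) (by norm_num) (by norm_num),
        leafDist_eval (by norm_num) (by norm_num) (by norm_num) (by norm_num) (by norm_num),
        leafDist_eval (by norm_num) (by norm_num) (by norm_num) (by norm_num) (by norm_num)]
    norm_num
  · rintro ψ hinj hbnd ⟨i, hi1, hi5, hr⟩
    have hbd : ∀ v : Fin 12, (ψ v - 1) / 4 ≤ 3 := fun v => by have h := hbnd v; omega
    have himg : Finset.image ψ Finset.univ = Finset.Icc i (i + 11) := by
      apply Finset.eq_of_subset_of_card_le
      · intro j hj
        rcases Finset.mem_image.1 hj with ⟨v, -, rfl⟩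
        exact Finset.mem_Icc.2 ⟨(hr v).1, (hr v).2⟩
      · rw [Finset.card_image_of_injective _ hinj, Nat.card_Icc]
        simp only [Finset.card_univ, Fintype.card_fin]
        omega
    have hIcc : ∀ x : ℕ, (∑ v : Fin 12, if (ψ v - 1) / 4 = x then (1:ℕ) else 0)
        = ∑ j ∈ Finset.Icc i (i + 11), (if (j - 1) / 4 = x then (1:ℕ) else 0) := by
      intro x
      rw [← himg, Finset.sum_image (fun a _ b _ h => hinj h)]
    have hc1 : (∑ v : Fin 12, if (((ψ v - 1) / 4 : ℕ) : Fin 4) = 1 then (1:ℕ) else 0) = 4 := by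
      rw [Finset.sum_congr rfl
        (fun v _ => if_congr (cast_eq_one_iff _ (hbd v)) rfl rfl), hIcc 1]
      interval_cases i <;> decide
    have hc2 : (∑ v : Fin 12, if (((ψ v - 1) / 4 : ℕ) : Fin 4) = 2 then (1:ℕ) else 0) = 4 := by
      rw [Finset.sum_congr rfl
        (fun v _ => if_congr (cast_eq_two_iff _ (hbd v)) rfl rfl), hIcc 2]
      interval_cases i <;> decide
    have hcross := crossing_ge_four (fun v => (((ψ v - 1) / 4 : ℕ) : Fin 4)) hc1 hc2
    beta_reduce at hcross
    have hLD : ∀ u v : Fin 12, ψ u ≠ ψ v → leafDist 4 2 (ψ u) (ψ v) =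
        2 + 2 * (if (((ψ u - 1) / 4 : ℕ) : Fin 4) = (((ψ v - 1) / 4 : ℕ) : Fin 4) then 0 else 1) := by
      intro u v hne
      rw [leafDist_eval (hbnd u).1 (hbnd u).2 (hbnd v).1 (hbnd v).2 hne]
      exact ld_cast _ _ (hbd u) (hbd v)
    rw [OV_exp ψ, hLD 0 1 (hinj.ne (by decide)), hLD 1 2 (hinj.ne (by decide)),
      hLD 0 3 (hinj.ne (by decide)), hLD 3 4 (hinj.ne (by decide)), hLD 4 5 (hinj.ne (by decide)),
      hLD 0 6 (hinj.ne (by decide)), hLD 6 7 (hinj.ne (by decide)), hLD 7 8 (hinj.ne (by decide)),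
      hLD 0 9 (hinj.ne (by decide)), hLD 9 10 (hinj.ne (by decide)), hLD 10 11 (hinj.ne (by decide))]
    omega
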